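/- The real radical of the ideal ⟨x² + y² + z² - 1, x² + y² + z - 1, x⟩ in ℝ[x,y,z] equals ⟨x, y² + z - 1, yz, z² - z⟩. -/

import Mathlib

open MvPolynomial

/-- The real zero set of an ideal. -/
def zeroSet {σ : Type*} (I : Ideal (MvPolynomial σ ℝ)) : Set (σ → ℝ) :=
  {x | ∀ f ∈ I, MvPolynomial.eval x f = 0}

/-- The ideal of polynomials vanishing on a set S ⊆ ℝⁿ. -/
noncomputable def vanishIdeal {σ : Type*} (S : Set (σ → ℝ)) : Ideal (MvPolynomial σ ℝ) where
  carrier := {p | ∀ x ∈ S, MvPolynomial.eval x p = 0}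
  add_mem' := by intro p q hp hq x hx; simp [hp x hx, hq x hx]
  zero_mem' := by intro x hx; simp
  smul_mem' := by intro c p hp x hx; simp [hp x hx]

/-- The real radical of an ideal I: polynomials vanishing on the real zero set of I. -/
noncomputable def realRadical {σ : Type*} (I : Ideal (MvPolynomial σ ℝ)) : Ideal (MvPolynomial σ ℝ) :=
  vanishIdeal (zeroSet I)


open MvPolynomial

noncomputable abbrev Jideal : Ideal (MvPolynomial (Fin 3) ℝ) :=
  Ideal.span ({X 0, (X 1) ^ 2 + X 2 - 1, X 1 * X 2, (X 2) ^ 2 - X 2} :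
    Set (MvPolynomial (Fin 3) ℝ))

lemma reduce_mod_J (p : MvPolynomial (Fin 3) ℝ) :
    ∃ a b c : ℝ, p - (C a + C b * X 1 + C c * X 2) ∈ Jideal := by
  induction p using MvPolynomial.induction_on with
  | C a => exact ⟨a, 0, 0, by simp⟩
  | add p q hp hq =>
    obtain ⟨a, b, c, hp⟩ := hp
    obtain ⟨a', b', c', hq⟩ := hq
    refine ⟨a + a', b + b', c + c', ?_⟩
    have : p + q - (C (a + a') + C (b + b') * X 1 + C (c + c') * X 2)
        = (p - (C a + C b * X 1 + C c * X 2)) + (q - (C a' + C b' * X 1 + C c' * X 2)) := by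
      push_cast [map_add]; ring
    rw [this]; exact add_mem hp hq
  | mul_X p i hp =>
    obtain ⟨a, b, c, hp⟩ := hp
    have hx : (X 0 : MvPolynomial (Fin 3) ℝ) ∈ Jideal := Ideal.subset_span (by simp)
    have hy : ((X 1) ^ 2 + X 2 - 1 : MvPolynomial (Fin 3) ℝ) ∈ Jideal :=
      Ideal.subset_span (by simp)
    have hyz : (X 1 * X 2 : MvPolynomial (Fin 3) ℝ) ∈ Jideal := Ideal.subset_span (by simp)
    have hz : ((X 2) ^ 2 - X 2 : MvPolynomial (Fin 3) ℝ) ∈ Jideal := Ideal.subset_span (by simp)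
    fin_cases i
    · refine ⟨0, 0, 0, ?_⟩
      show p * X 0 - (C (0:ℝ) + C (0:ℝ) * X 1 + C (0:ℝ) * X 2) ∈ Jideal
      have : p * X 0 - (C (0:ℝ) + C (0:ℝ) * X 1 + C (0:ℝ) * X 2) = p * X 0 := by
        simp only [C_0, zero_mul, add_zero, zero_add, sub_zero]
      rw [this]; exact Ideal.mul_mem_left _ p hx
    · refine ⟨b, a, -b, ?_⟩
      show p * X 1 - (C b + C a * X 1 + C (-b) * X 2) ∈ Jideal
      have : p * X 1 - (C b + C a * X 1 + C (-b) * X 2)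
          = (p - (C a + C b * X 1 + C c * X 2)) * X 1
            + C b * ((X 1) ^ 2 + X 2 - 1) + C c * (X 1 * X 2) := by
        simp only [map_neg]; ring
      rw [this]
      exact add_mem (add_mem (Ideal.mul_mem_right _ _ hp) (Ideal.mul_mem_left _ _ hy))
        (Ideal.mul_mem_left _ _ hyz)
    · refine ⟨0, 0, a + c, ?_⟩
      show p * X 2 - (C (0:ℝ) + C (0:ℝ) * X 1 + C (a + c) * X 2) ∈ Jideal
      have : p * X 2 - (C (0:ℝ) + C (0:ℝ) * X 1 + C (a + c) * X 2)
          = (p - (C a + C b * X 1 + C c * X 2)) * X 2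
            + C b * (X 1 * X 2) + C c * ((X 2) ^ 2 - X 2) := by
        simp only [map_add, C_0, zero_mul, add_zero, zero_add]; ring
      rw [this]
      exact add_mem (add_mem (Ideal.mul_mem_right _ _ hp) (Ideal.mul_mem_left _ _ hyz))
        (Ideal.mul_mem_left _ _ hz)

theorem realRadical_planar_spheroloid :
    realRadical (Ideal.span
        ({(X 0) ^ 2 + (X 1) ^ 2 + (X 2) ^ 2 - 1,
          (X 0) ^ 2 + (X 1) ^ 2 + X 2 - 1,
          X 0} : Set (MvPolynomial (Fin 3) ℝ)))
      = Ideal.span ({X 0, (X 1) ^ 2 + X 2 - 1, X 1 * X 2, (X 2) ^ 2 - X 2} :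
          Set (MvPolynomial (Fin 3) ℝ)) := by
  set I := Ideal.span
        ({(X 0) ^ 2 + (X 1) ^ 2 + (X 2) ^ 2 - 1,
          (X 0) ^ 2 + (X 1) ^ 2 + X 2 - 1,
          X 0} : Set (MvPolynomial (Fin 3) ℝ)) with hI
  -- the three points
  have hpts : ∀ pt : Fin 3 → ℝ, pt ∈ zeroSet I ↔
      pt 0 = 0 ∧ pt 1 ^ 2 + pt 2 - 1 = 0 ∧ pt 1 * pt 2 = 0 ∧ pt 2 ^ 2 - pt 2 = 0 := by
    intro pt
    constructor
    · intro h
      have h1 := h _ (Ideal.subset_span (show _ ∈ _ by simp) :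
        ((X 0) ^ 2 + (X 1) ^ 2 + (X 2) ^ 2 - 1 : MvPolynomial (Fin 3) ℝ) ∈ I)
      have h2 := h _ (Ideal.subset_span (show _ ∈ _ by simp) :
        ((X 0) ^ 2 + (X 1) ^ 2 + X 2 - 1 : MvPolynomial (Fin 3) ℝ) ∈ I)
      have h3 := h _ (Ideal.subset_span (show _ ∈ _ by simp) :
        ((X 0) : MvPolynomial (Fin 3) ℝ) ∈ I)
      simp only [map_sub, map_add, map_pow, map_one, eval_X] at h1 h2 h3
      have e1 : pt 1 ^ 2 + pt 2 - 1 = 0 := by nlinarith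
      have e2 : pt 2 ^ 2 - pt 2 = 0 := by nlinarith
      have e3 : pt 1 * pt 2 = 0 := by nlinarith [sq_nonneg (pt 1 * pt 2)]
      exact ⟨h3, e1, e3, e2⟩
    · rintro ⟨e0, e1, e2, e3⟩ f hf
      induction hf using Submodule.span_induction with
      | mem g hg =>
        rcases hg with rfl | rfl | rfl
        all_goals simp only [map_sub, map_add, map_pow, map_one, eval_X]
        · nlinarith
        · nlinarith
        · exact e0
      | zero => simp
      | add f g _ _ hf hg => simp [map_add, hf, hg]
      | smul r f _ hf => simp [smul_eq_mul, hf]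
  apply le_antisymm
  · intro p hp
    obtain ⟨a, b, c, hm⟩ := reduce_mod_J p
    -- J vanishes on the three points
    have hJvan : ∀ f ∈ Jideal, ∀ pt : Fin 3 → ℝ, pt ∈ zeroSet I → eval pt f = 0 := by
      intro f hf pt hpt
      rw [hpts] at hpt
      obtain ⟨e0, e1, e2, e3⟩ := hpt
      induction hf using Submodule.span_induction with
      | mem g hg =>
        rcases hg with rfl | rfl | rfl | rfl
        all_goals simp only [map_sub, map_add, map_mul, map_pow, map_one, eval_X]
        exacts [e0, e1, e2, e3]
      | zero => simp
      | add f g _ _ hf hg => simp [map_add, hf, hg]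
      | smul r f _ hf => simp [smul_eq_mul, hf]
    -- the three points are in zeroSet I
    have p1 : (![0, 1, 0] : Fin 3 → ℝ) ∈ zeroSet I := by rw [hpts]; norm_num [Matrix.cons_val_two, Matrix.vecHead, Matrix.vecTail]
    have p2 : (![0, -1, 0] : Fin 3 → ℝ) ∈ zeroSet I := by rw [hpts]; norm_num [Matrix.cons_val_two, Matrix.vecHead, Matrix.vecTail]
    have p3 : (![0, 0, 1] : Fin 3 → ℝ) ∈ zeroSet I := by rw [hpts]; norm_num [Matrix.cons_val_two, Matrix.vecHead, Matrix.vecTail]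
    have hv1 := hJvan _ hm _ p1
    have hv2 := hJvan _ hm _ p2
    have hv3 := hJvan _ hm _ p3
    have hp1 := hp _ p1
    have hp2 := hp _ p2
    have hp3 := hp _ p3
    simp only [map_sub, map_add, map_mul, eval_C, eval_X, hp1, hp2, hp3] at hv1 hv2 hv3
    norm_num [Matrix.cons_val_two, Matrix.vecHead, Matrix.vecTail] at hv1 hv2 hv3
    have ha : a = 0 := by linarith
    have hb : b = 0 := by linarith
    have hc : c = 0 := by linarith
    subst ha hb hc
    simpa using hm
  · rw [Ideal.span_le]
    intro g hg pt hpt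
    rw [hpts] at hpt
    obtain ⟨e0, e1, e2, e3⟩ := hpt
    rcases hg with rfl | rfl | rfl | rfl
    all_goals simp only [map_sub, map_add, map_mul, map_pow, map_one, eval_X]
    exacts [e0, e1, e2, e3]
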